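/- Let G be a graph and S ⊆ E(G) a minimal set of edges with α(G/S) < α(G) (minimal with respect to set inclusion among edge sets whose contraction reduces the independence number). Then the spanning subgraph (V(G), S) is a forest. -/

import Mathlib

open SimpleGraph

def IsIndepSet' {V : Type*} (G : SimpleGraph V) (s : Finset V) : Prop :=
  ∀ u ∈ s, ∀ v ∈ s, ¬ G.Adj u v

noncomputable def alpha' {V : Type*} (G : SimpleGraph V) : ℕ :=
  sSup {n | ∃ s : Finset V, IsIndepSet' G s ∧ s.card = n}

def IsVC' {V : Type*} (G : SimpleGraph V) (s : Finset V) : Prop :=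
  ∀ ⦃u v : V⦄, G.Adj u v → u ∈ s ∨ v ∈ s

noncomputable def tau' {V : Type*} (G : SimpleGraph V) : ℕ :=
  sInf {n | ∃ s : Finset V, IsVC' G s ∧ s.card = n}

def IsMatching' {V : Type*} (G : SimpleGraph V) (M : Finset (Sym2 V)) : Prop :=
  (↑M : Set (Sym2 V)) ⊆ G.edgeSet ∧
    (↑M : Set (Sym2 V)).Pairwise fun e f => ∀ v : V, v ∈ e → v ∉ f

noncomputable def mu' {V : Type*} (G : SimpleGraph V) : ℕ :=
  sSup {n | ∃ M : Finset (Sym2 V), IsMatching' G M ∧ M.card = n}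

noncomputable def omega' {V : Type*} (G : SimpleGraph V) : ℕ :=
  sSup {n | ∃ s : Finset V, G.IsClique (↑s : Set V) ∧ s.card = n}

def IsBipartite' {V : Type*} (G : SimpleGraph V) : Prop :=
  ∃ A : Set V, ∀ ⦃u v : V⦄, G.Adj u v → (u ∈ A ↔ v ∉ A)

/-- The contraction `G/S`: vertices are the connected components of the spanning
subgraph `(V(G), S)`, two components adjacent iff they contain adjacent vertices of `G`. -/
noncomputable def contract' {V : Type*} (G : SimpleGraph V) (S : Set (Sym2 V)) :
    SimpleGraph (SimpleGraph.fromEdgeSet S).ConnectedComponent :=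
  SimpleGraph.fromRel fun A B => ∃ u v : V,
    (SimpleGraph.fromEdgeSet S).connectedComponentMk u = A ∧
    (SimpleGraph.fromEdgeSet S).connectedComponentMk v = B ∧ G.Adj u v

/-- Add a universal vertex `none` to `G`. -/
def addUniversal {V : Type*} (G : SimpleGraph V) : SimpleGraph (Option V) :=
  SimpleGraph.fromRel fun a b =>
    a = none ∨ ∃ u v : V, a = some u ∧ b = some v ∧ G.Adj u v

lemma indep_map' {V W : Type*} {G : SimpleGraph V} {H : SimpleGraph W} (f : G ≃g H)
    {s : Finset V} (hs : IsIndepSet' G s) :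
    IsIndepSet' H (s.map f.toEquiv.toEmbedding) := by
  intro u hu v hv
  simp only [Finset.mem_map, Equiv.coe_toEmbedding] at hu hv
  obtain ⟨a, ha, rfl⟩ := hu
  obtain ⟨b, hb, rfl⟩ := hv
  exact fun h => hs a ha b hb (f.map_adj_iff.mp h)

lemma alpha'_set_subset {V W : Type*} {G : SimpleGraph V} {H : SimpleGraph W} (f : G ≃g H) :
    {n | ∃ s : Finset V, IsIndepSet' G s ∧ s.card = n} ⊆
      {n | ∃ s : Finset W, IsIndepSet' H s ∧ s.card = n} := by
  rintro n ⟨s, hs, rfl⟩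
  exact ⟨s.map f.toEquiv.toEmbedding, indep_map' f hs, by simp⟩

lemma alpha'_eq_of_iso {V W : Type*} {G : SimpleGraph V} {H : SimpleGraph W} (f : G ≃g H) :
    alpha' G = alpha' H := by
  unfold alpha'
  rw [Set.Subset.antisymm (alpha'_set_subset f) (alpha'_set_subset f.symm)]

theorem stmt6 {V : Type*} [Fintype V] (G : SimpleGraph V)
    (S : Set (Sym2 V)) (hS : S ⊆ G.edgeSet)
    (hcrit : alpha' (contract' G S) < alpha' G)
    (hmin : ∀ S' ⊆ S, S' ≠ S → ¬ alpha' (contract' G S') < alpha' G) :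
    (SimpleGraph.fromEdgeSet S).IsAcyclic := by
  by_contra hcyc
  rw [SimpleGraph.isAcyclic_iff_forall_adj_isBridge] at hcyc
  push_neg at hcyc
  obtain ⟨x, y, hadj, hbr⟩ := hcyc
  rw [SimpleGraph.isBridge_iff] at hbr
  have hreach : ((SimpleGraph.fromEdgeSet S).deleteEdges {s(x,y)}).Reachable x y := by
    by_contra h; exact hbr h
  have heS : s(x,y) ∈ S := ((SimpleGraph.fromEdgeSet_adj S).mp hadj).1
  set S' : Set (Sym2 V) := S \ {s(x,y)} with hS'def
  have hdel : SimpleGraph.fromEdgeSet S' =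
      (SimpleGraph.fromEdgeSet S).deleteEdges {s(x,y)} := by
    ext u v
    simp only [SimpleGraph.fromEdgeSet_adj, SimpleGraph.deleteEdges_adj, hS'def,
      Set.mem_diff, Set.mem_singleton_iff]
    tauto
  have hiff : ∀ u v : V, (SimpleGraph.fromEdgeSet S').Reachable u v ↔
      (SimpleGraph.fromEdgeSet S).Reachable u v := by
    intro u v
    constructor
    · exact fun h => h.mono (SimpleGraph.fromEdgeSet_mono Set.diff_subset)
    · intro h
      rw [hdel]
      obtain ⟨w⟩ := h
      induction w with
      | nil => exact Reachable.refl _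
      | @cons a b c hab p ih =>
        refine Reachable.trans ?_ ih
        by_cases he : s(a, b) = s(x, y)
        · rcases Sym2.eq_iff.mp he with ⟨rfl, rfl⟩ | ⟨rfl, rfl⟩
          · exact hreach
          · exact hreach.symm
        · exact SimpleGraph.Adj.reachable (by
            rw [SimpleGraph.deleteEdges_adj]
            exact ⟨hab, by simpa using he⟩)
  let φ : (SimpleGraph.fromEdgeSet S').ConnectedComponent ≃
      (SimpleGraph.fromEdgeSet S).ConnectedComponent := Quot.congrRight hiff
  have hφ : ∀ u : V, φ ((SimpleGraph.fromEdgeSet S').connectedComponentMk u) =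
      (SimpleGraph.fromEdgeSet S).connectedComponentMk u := fun u => rfl
  have key : ∀ (a : (SimpleGraph.fromEdgeSet S').ConnectedComponent) (u : V),
      (SimpleGraph.fromEdgeSet S).connectedComponentMk u = φ a ↔
      (SimpleGraph.fromEdgeSet S').connectedComponentMk u = a := by
    intro a u
    rw [← hφ u]
    exact Equiv.apply_eq_iff_eq φ
  let F : contract' G S' ≃g contract' G S := by
    refine ⟨φ, ?_⟩
    intro a b
    simp only [contract', SimpleGraph.fromRel_adj, key, ne_eq, Equiv.apply_eq_iff_eq]
  have heq : alpha' (contract' G S') = alpha' (contract' G S) := alpha'_eq_of_iso F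
  refine hmin S' Set.diff_subset ?_ (heq ▸ hcrit)
  intro h
  have : s(x,y) ∈ S' := h.symm ▸ heS
  exact this.2 rfl
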